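/- For A ∈ ℝ_+^{n×n} and 1 ≤ k ≤ n, the mixed partial derivative ∂^n/∂x_1⋯∂x_n of p(x) := (x_1+...+x_n)^{n-k} · p_{k,A}(x) evaluated at 0 equals (n-k)! · perm_k(A). -/

import Mathlib

open MvPolynomial

open Classical in
/-- `perm_k A`: the sum of the permanents of all `k × k` submatrices of `A`, written as a
sum over partial permutations (sets of `k` positions with distinct rows and columns). -/
noncomputable def permk {n : ℕ} (A : Matrix (Fin n) (Fin n) ℝ) (k : ℕ) : ℝ :=
  ∑ s ∈ Finset.univ.filter (fun s : Finset (Fin n × Fin n) =>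
      s.card = k ∧ (s : Set (Fin n × Fin n)).InjOn Prod.fst ∧
        (s : Set (Fin n × Fin n)).InjOn Prod.snd),
    ∏ p ∈ s, A p.1 p.2

/-- The linear form `(Ax)_i` as a multivariate polynomial. -/
noncomputable def rowPoly {n : ℕ} (A : Matrix (Fin n) (Fin n) ℝ) (i : Fin n) :
    MvPolynomial (Fin n) ℝ :=
  ∑ j, MvPolynomial.C (A i j) * MvPolynomial.X j

/-- The polynomial `p_{k,A} = ∑_{1 ≤ i₁ < … < i_k ≤ n} ∏_{j=1}^k (Ax)_{i_j}`. -/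
noncomputable def pkPoly {n : ℕ} (A : Matrix (Fin n) (Fin n) ℝ) (k : ℕ) :
    MvPolynomial (Fin n) ℝ :=
  ∑ s ∈ (Finset.univ : Finset (Fin n)).powersetCard k, ∏ i ∈ s, rowPoly A i

/-- The mixed partial derivative `∂ⁿ/∂x₁⋯∂xₙ` of `p`, evaluated at `0`. -/
noncomputable def mixedDerivAtZero {n : ℕ} (p : MvPolynomial (Fin n) ℝ) : ℝ :=
  MvPolynomial.eval 0
    ((Finset.univ : Finset (Fin n)).toList.foldr (fun i q => MvPolynomial.pderiv i q) p)

section Auxiliary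

variable {n : ℕ}

/-- The characteristic multi-index of a finite set of variables. -/
noncomputable def chiAux (u : Finset (Fin n)) : Fin n →₀ ℕ := ∑ j ∈ u, Finsupp.single j 1

lemma chiAux_apply (u : Finset (Fin n)) (j : Fin n) : chiAux u j = if j ∈ u then 1 else 0 := by
  classical
  rw [chiAux, Finset.sum_apply']
  simp [Finsupp.single_apply]

lemma coeff_pderiv (i : Fin n) (m : Fin n →₀ ℕ) (p : MvPolynomial (Fin n) ℝ) :
    coeff m (pderiv i p) = (m i + 1) * coeff (m + Finsupp.single i 1) p := by
  induction p using MvPolynomial.induction_on' with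
  | add p q hp hq => simp [map_add, hp, hq, mul_add]
  | monomial d a =>
    rw [pderiv_monomial, coeff_monomial, coeff_monomial]
    split_ifs with h1 h2 h2
    · subst h2; simp [mul_comm]
    · rcases Nat.eq_zero_or_pos (d i) with h0 | h0
      · simp [h0]
      · exfalso; apply h2
        rw [← h1, tsub_add_cancel_of_le]
        rwa [Finsupp.single_le_iff]
    · exfalso; apply h1; subst h2; simp
    · ring

lemma coeff_foldr_pderiv (l : List (Fin n)) (hl : l.Nodup) (m : Fin n →₀ ℕ)
    (hm : ∀ i ∈ l, m i = 0) (p : MvPolynomial (Fin n) ℝ) :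
    coeff m (l.foldr (fun i q => pderiv i q) p)
      = coeff (m + (l.map (fun i => Finsupp.single i 1)).sum) p := by
  induction l generalizing m with
  | nil => simp
  | cons a l ih =>
    rw [List.foldr_cons, coeff_pderiv, List.map_cons, List.sum_cons]
    rw [ih (List.nodup_cons.mp hl).2 _ ?_, add_assoc]
    · rw [hm a (by simp)]
      push_cast
      ring
    · intro i hi
      rw [Finsupp.add_apply, hm i (by simp [hi]), Finsupp.single_apply]
      have : a ≠ i := fun h => (List.nodup_cons.mp hl).1 (h ▸ hi)
      simp [this]

lemma mixedDerivAtZero_eq_coeff (p : MvPolynomial (Fin n) ℝ) :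
    mixedDerivAtZero p = coeff (chiAux Finset.univ) p := by
  rw [mixedDerivAtZero, eval_zero, constantCoeff_eq]
  rw [coeff_foldr_pderiv _ (Finset.nodup_toList _) 0 (by simp) p, zero_add]
  rw [chiAux, ← Finset.sum_map_toList]

lemma support_chiAux (u : Finset (Fin n)) : (chiAux u).support = u := by
  ext j; simp [Finsupp.mem_support_iff, chiAux_apply]

lemma chiAux_sub_single {u : Finset (Fin n)} {j : Fin n} (hj : j ∈ u) :
    chiAux u - Finsupp.single j 1 = chiAux (u.erase j) := by
  have : chiAux u = Finsupp.single j 1 + chiAux (u.erase j) := by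
    rw [chiAux, chiAux]
    exact (Finset.add_sum_erase u (fun j => Finsupp.single j 1) hj).symm
  rw [this, add_tsub_cancel_left]

lemma coeff_sum_X_pow (m : ℕ) (u : Finset (Fin n)) (hu : u.card = m) :
    coeff (chiAux u) ((∑ i, X i : MvPolynomial (Fin n) ℝ) ^ m) = m.factorial := by
  classical
  induction m generalizing u with
  | zero =>
    rw [Finset.card_eq_zero] at hu
    subst hu
    simp [chiAux, coeff_zero_one]
  | succ m ih =>
    rw [pow_succ, Finset.mul_sum, coeff_sum]
    have : ∀ j, coeff (chiAux u) ((∑ i, X i : MvPolynomial (Fin n) ℝ) ^ m * X j)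
        = if j ∈ u then (m.factorial : ℝ) else 0 := by
      intro j
      rw [coeff_mul_X', support_chiAux]
      split_ifs with h
      · rw [chiAux_sub_single h, ih _ (by rw [Finset.card_erase_of_mem h, hu]; rfl)]
      · rfl
    simp_rw [this]
    rw [Finset.sum_ite_mem, Finset.univ_inter, Finset.sum_const, hu, nsmul_eq_mul]
    push_cast [Nat.factorial_succ]
    ring

lemma chiAux_le {v u : Finset (Fin n)} (h : v ⊆ u) : chiAux v ≤ chiAux u := by
  intro j
  simp only [chiAux_apply]
  by_cases hj : j ∈ v
  · simp [hj, h hj]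
  · simp [hj]

lemma chiAux_sub_chiAux {v u : Finset (Fin n)} (h : v ⊆ u) :
    chiAux u - chiAux v = chiAux (u \ v) := by
  classical
  have huv : chiAux u = chiAux v + chiAux (u \ v) := by
    rw [chiAux, chiAux, chiAux, ← Finset.sum_union Finset.disjoint_sdiff]
    rw [Finset.union_sdiff_of_subset h]
  rw [huv, add_tsub_cancel_left]

lemma prod_X_eq_monomial {α : Type*} (t : Finset α) (f : α → Fin n) :
    (∏ x ∈ t, (X (f x) : MvPolynomial (Fin n) ℝ))
      = monomial (∑ x ∈ t, Finsupp.single (f x) 1) 1 := by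
  induction t using Finset.cons_induction with
  | empty => simp
  | cons a t ha ih =>
    rw [Finset.prod_cons, Finset.sum_cons, ih, X, monomial_mul, one_mul]

open Classical in
lemma coeff_pow_mul_prod_rowPoly (A : Matrix (Fin n) (Fin n) ℝ) (k : ℕ)
    (s : Finset (Fin n)) (hs : s.card = k) :
    coeff (chiAux Finset.univ) ((∑ i, X i) ^ (n - k) * ∏ i ∈ s, rowPoly A i)
      = (Nat.factorial (n - k) : ℝ) *
        ∑ g ∈ (Finset.univ : Finset ((↥s) → Fin n)).filter Function.Injective,
          ∏ x : ↥s, A ↑x (g x) := by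
  rw [← Finset.prod_coe_sort s (rowPoly A)]
  simp_rw [rowPoly]
  rw [Fintype.prod_sum (fun (x : ↥s) (j : Fin n) => C (A ↑x j) * X j)]
  rw [Finset.mul_sum, coeff_sum]
  have hterm : ∀ g : ↥s → Fin n,
      coeff (chiAux Finset.univ) ((∑ i, X i) ^ (n - k) * ∏ x : ↥s, (C (A ↑x (g x)) * X (g x)))
        = (if Function.Injective g then ((n - k).factorial : ℝ) else 0)
            * ∏ x : ↥s, A ↑x (g x) := by
    intro g
    rw [Finset.prod_mul_distrib,
      ← map_prod (C : ℝ →+* MvPolynomial (Fin n) ℝ) (fun x : ↥s => A ↑x (g x)) Finset.univ,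
      prod_X_eq_monomial]
    rw [show ((∑ i, X i : MvPolynomial (Fin n) ℝ) ^ (n - k) *
        (C (∏ x : ↥s, A ↑x (g x)) * monomial (∑ x : ↥s, Finsupp.single (g x) 1) 1))
      = C (∏ x : ↥s, A ↑x (g x)) *
        ((∑ i, X i) ^ (n - k) * monomial (∑ x : ↥s, Finsupp.single (g x) 1) 1) by ring]
    rw [coeff_C_mul, coeff_mul_monomial']
    by_cases hg : Function.Injective g
    · have himg : (∑ x : ↥s, Finsupp.single (g x) 1) = chiAux (Finset.univ.image g) := by
        rw [chiAux, Finset.sum_image (fun x _ y _ h => hg h)]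
      have hle : (∑ x : ↥s, Finsupp.single (g x) 1) ≤ chiAux Finset.univ := by
        rw [himg]; exact chiAux_le (Finset.subset_univ _)
      rw [if_pos hle, himg, chiAux_sub_chiAux (Finset.subset_univ _)]
      have hcard : (Finset.univ \ Finset.univ.image g).card = n - k := by
        rw [Finset.card_sdiff_of_subset (Finset.subset_univ _), Finset.card_image_of_injective _ hg]
        simp [hs]
      rw [coeff_sum_X_pow _ _ hcard, if_pos hg, mul_one]
      ring
    · have hnle : ¬ (∑ x : ↥s, Finsupp.single (g x) 1) ≤ chiAux Finset.univ := by
        intro hle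
        rw [Function.not_injective_iff] at hg
        obtain ⟨x, y, hgxy, hxy⟩ := hg
        have h2 : 2 ≤ (∑ x : ↥s, Finsupp.single (g x) 1) (g x) := by
          rw [Finset.sum_apply']
          calc (2 : ℕ) = ∑ z ∈ ({x, y} : Finset ↥s), (Finsupp.single (g z) 1) (g x) := by
                rw [Finset.sum_pair hxy]
                simp [hgxy]
            _ ≤ _ := Finset.sum_le_sum_of_subset (Finset.subset_univ _)
        have h1 := hle (g x)
        rw [chiAux_apply, if_pos (Finset.mem_univ _)] at h1
        omega
      rw [if_neg hnle, if_neg hg, zero_mul, mul_zero]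
  simp_rw [hterm]
  rw [Finset.mul_sum, Finset.sum_filter]
  congr 1
  ext g
  split_ifs <;> ring

open Classical in
lemma sum_sum_inj_eq_permk (A : Matrix (Fin n) (Fin n) ℝ) (k : ℕ) :
    ∑ s ∈ (Finset.univ : Finset (Fin n)).powersetCard k,
      ∑ g ∈ (Finset.univ : Finset ((↥s) → Fin n)).filter Function.Injective,
        ∏ x : ↥s, A ↑x (g x)
      = permk A k := by
  unfold permk
  rw [← Finset.sum_fiberwise_of_maps_to (g := fun t : Finset (Fin n × Fin n) => t.image Prod.fst)
    (t := (Finset.univ : Finset (Fin n)).powersetCard k) ?_]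
  swap
  · intro t ht
    rw [Finset.mem_filter] at ht
    obtain ⟨-, hcard, hfst, -⟩ := ht
    rw [Finset.mem_powersetCard]
    exact ⟨Finset.subset_univ _, by rw [Finset.card_image_of_injOn hfst, hcard]⟩
  refine Finset.sum_congr rfl fun s hs => ?_
  rw [Finset.mem_powersetCard] at hs
  refine Finset.sum_bij (fun g _ => Finset.univ.image (fun x : ↥s => ((x : Fin n), g x)))
    ?_ ?_ ?_ ?_
  · -- membership
    intro g hg
    rw [Finset.mem_filter] at hg ⊢
    have hginj := hg.2
    have hinj : Function.Injective (fun x : ↥s => ((x : Fin n), g x)) := by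
      intro x y h
      exact Subtype.ext (congrArg Prod.fst h)
    refine ⟨Finset.mem_filter.mpr ⟨Finset.mem_univ _, ?_, ?_, ?_⟩, ?_⟩
    · rw [Finset.card_image_of_injective _ hinj, Finset.card_univ, Fintype.card_coe, hs.2]
    · intro p hp q hq hpq
      simp only [Finset.coe_image, Set.mem_image] at hp hq
      obtain ⟨x, -, rfl⟩ := hp
      obtain ⟨y, -, rfl⟩ := hq
      simp only at hpq
      rw [Subtype.ext hpq]
    · intro p hp q hq hpq
      simp only [Finset.coe_image, Set.mem_image] at hp hq
      obtain ⟨x, -, rfl⟩ := hp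
      obtain ⟨y, -, rfl⟩ := hq
      simp only at hpq
      rw [hginj hpq]
    · rw [Finset.image_image]
      ext j
      simp
  · -- injectivity
    intro g₁ h₁ g₂ h₂ heq
    funext x
    have hx : ((x : Fin n), g₁ x) ∈ Finset.univ.image (fun y : ↥s => ((y : Fin n), g₂ y)) := by
      have heq' : Finset.univ.image (fun x : ↥s => ((x : Fin n), g₁ x))
          = Finset.univ.image (fun x : ↥s => ((x : Fin n), g₂ x)) := heq
      rw [← heq']
      exact Finset.mem_image_of_mem _ (Finset.mem_univ x)
    rw [Finset.mem_image] at hx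
    obtain ⟨y, -, hy⟩ := hx
    have : y = x := Subtype.ext (congrArg Prod.fst hy)
    subst this
    exact (congrArg Prod.snd hy).symm
  · -- surjectivity
    intro t ht
    rw [Finset.mem_filter, Finset.mem_filter] at ht
    obtain ⟨⟨-, hcard, hfst, hsnd⟩, himg⟩ := ht
    have hex : ∀ x : ↥s, ∃ j, ((x : Fin n), j) ∈ t := by
      intro x
      have : (x : Fin n) ∈ t.image Prod.fst := by rw [himg]; exact x.2
      rw [Finset.mem_image] at this
      obtain ⟨p, hp, hpx⟩ := this
      exact ⟨p.2, by rwa [show ((x : Fin n), p.2) = p from Prod.ext hpx.symm rfl]⟩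
    choose g hg using hex
    have hginj : Function.Injective g := by
      intro x y hxy
      have := hsnd (Finset.mem_coe.mpr (hg x)) (Finset.mem_coe.mpr (hg y)) (by simpa using hxy)
      exact Subtype.ext (congrArg Prod.fst this)
    refine ⟨g, Finset.mem_filter.mpr ⟨Finset.mem_univ _, hginj⟩, ?_⟩
    apply Finset.Subset.antisymm
    · intro p hp
      rw [Finset.mem_image] at hp
      obtain ⟨x, -, rfl⟩ := hp
      exact hg x
    · intro p hp
      have hp1 : p.1 ∈ s := by rw [← himg]; exact Finset.mem_image_of_mem _ hp
      have := hfst (Finset.mem_coe.mpr (hg ⟨p.1, hp1⟩)) (Finset.mem_coe.mpr hp) rfl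
      rw [Finset.mem_image]
      exact ⟨⟨p.1, hp1⟩, Finset.mem_univ _, this⟩
  · -- values
    intro g hg
    rw [Finset.prod_image]
    intro x _ y _ h
    exact Subtype.ext (congrArg Prod.fst h)

end Auxiliary

/-- For `A ∈ ℝ₊ⁿˣⁿ` and `1 ≤ k ≤ n`, the mixed partial derivative
`∂ⁿ/∂x₁⋯∂xₙ` of `(x₁+⋯+xₙ)^{n-k} · p_{k,A}` at `0` equals `(n-k)! · perm_k A`. -/
theorem mixedDeriv_eq_factorial_mul_permk (n k : ℕ) (hk : 1 ≤ k) (hkn : k ≤ n)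
    (A : Matrix (Fin n) (Fin n) ℝ) (hnn : ∀ i j, 0 ≤ A i j) :
    mixedDerivAtZero ((∑ i, MvPolynomial.X i) ^ (n - k) * pkPoly A k)
      = (Nat.factorial (n - k) : ℝ) * permk A k := by
  classical
  rw [mixedDerivAtZero_eq_coeff, pkPoly, Finset.mul_sum, coeff_sum]
  rw [Finset.sum_congr rfl (fun s hs =>
    coeff_pow_mul_prod_rowPoly A k s (Finset.mem_powersetCard.mp hs).2)]
  rw [← Finset.mul_sum, sum_sum_inj_eq_permk]
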